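/- arXiv:1806.02122 — 3 statements merged into one kernel-verified Lean document; each statement's English description precedes it below -/
import Mathlib

section
/- The number of spanning trees of the complete graph on n vertices is n^(n-2) for n ≥ 1. -/
open SimpleGraph


noncomputable def treeCount {V : Type*} (Γ : SimpleGraph V) : ℕ :=
  {H : Γ.Subgraph | H.IsSpanning ∧ H.coe.IsTree}.ncard

def powerGraph (G : Type*) [Group G] : SimpleGraph G where
  Adj x y := x ≠ y ∧ (x ∈ Subgroup.zpowers y ∨ y ∈ Subgroup.zpowers x)
  symm := ⟨by rintro a b ⟨h, h'⟩; exact ⟨h.symm, h'.symm⟩⟩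
  loopless := ⟨by intro a h; exact h.1 rfl⟩

def powerGraphOn (G : Type*) [Group G] (X : Set G) : SimpleGraph X where
  Adj x y := x ≠ y ∧ (Subgroup.zpowers (x : G) ≤ Subgroup.zpowers (y : G) ∨
      Subgroup.zpowers (y : G) ≤ Subgroup.zpowers (x : G))
  symm := ⟨by rintro a b ⟨h, h'⟩; exact ⟨h.symm, h'.symm⟩⟩
  loopless := ⟨by intro a h; exact h.1 rfl⟩

def joinGraph {α β : Type*} (G₁ : SimpleGraph α) (G₂ : SimpleGraph β) :
    SimpleGraph (α ⊕ β) where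
  Adj u v := match u, v with
    | .inl a, .inl b => G₁.Adj a b
    | .inr a, .inr b => G₂.Adj a b
    | _, _ => True
  symm := ⟨by rintro (a|a) (b|b) h <;> simp_all <;> exact h.symm⟩
  loopless := ⟨by rintro (a|a) h <;> exact h.ne rfl⟩

def disjUnionGraph {α β : Type*} (G₁ : SimpleGraph α) (G₂ : SimpleGraph β) :
    SimpleGraph (α ⊕ β) where
  Adj u v := match u, v with
    | .inl a, .inl b => G₁.Adj a b
    | .inr a, .inr b => G₂.Adj a b
    | _, _ => False
  symm := ⟨by rintro (a|a) (b|b) h <;> simp_all <;> exact h.symm⟩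
  loopless := ⟨by rintro (a|a) h <;> exact h.ne rfl⟩

def copiesK (c k : ℕ) : SimpleGraph (Fin c × Fin k) where
  Adj u v := u.1 = v.1 ∧ u ≠ v
  symm := ⟨by rintro a b ⟨h, h'⟩; exact ⟨h.symm, h'.symm⟩⟩
  loopless := ⟨by intro a h; exact h.2 rfl⟩


namespace CayleyAux


variable {n : ℕ}

/-- `f` is a parent function on `s` rooted at `r`. -/
def IsPF (s : Finset (Fin n)) (r : Fin n) (f : Fin n → Fin n) : Prop :=
  (∀ v, v ∉ s → f v = v) ∧ (∀ v ∈ s, f v ∈ s) ∧ f r = r ∧ (∀ v ∈ s, ∃ k, f^[k] v = r)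

lemma IsPF.ne_self {s : Finset (Fin n)} {r : Fin n} {f : Fin n → Fin n}
    (hf : IsPF s r f) {v : Fin n} (hv : v ∈ s) (hvr : v ≠ r) : f v ≠ v := by
  intro h
  obtain ⟨k, hk⟩ := hf.2.2.2 v hv
  rw [Function.iterate_fixed h k] at hk
  exact hvr hk

lemma IsPF.iterate_mem {s : Finset (Fin n)} {r : Fin n} {f : Fin n → Fin n}
    (hf : IsPF s r f) {v : Fin n} (hv : v ∈ s) (k : ℕ) : f^[k] v ∈ s := by
  induction k with
  | zero => exact hv
  | succ k ih => rw [Function.iterate_succ_apply']; exact hf.2.1 _ ih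

/-- minimal number of steps to reach `r`. -/
noncomputable def depth (f : Fin n → Fin n) (r v : Fin n) : ℕ := sInf {k | f^[k] v = r}

lemma depth_spec {f : Fin n → Fin n} {r v : Fin n} (h : ∃ k, f^[k] v = r) :
    f^[depth f r v] v = r := Nat.sInf_mem h

lemma depth_lt {f : Fin n → Fin n} {r v : Fin n} (h : ∃ k, f^[k] v = r) (hv : v ≠ r) :
    depth f r (f v) < depth f r v := by
  have hd := depth_spec h
  set d := depth f r v with hdd
  have hd0 : d ≠ 0 := by
    intro h0
    rw [h0] at hd
    exact hv hd
  have hmem : f^[d - 1] (f v) = r := by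
    rw [← Function.iterate_succ_apply, Nat.succ_eq_add_one, Nat.sub_add_cancel
      (Nat.one_le_iff_ne_zero.mpr hd0)]
    exact hd
  have : depth f r (f v) ≤ d - 1 := Nat.sInf_le hmem
  omega

lemma eq_root_of_periodic {f : Fin n → Fin n} {r v : Fin n} (hr : f r = r)
    (hreach : ∃ k, f^[k] v = r) {m : ℕ} (hm : 0 < m) (hper : f^[m] v = v) : v = r := by
  obtain ⟨k, hk⟩ := hreach
  have h1 : f^[m * k] v = v := by
    rw [Function.iterate_mul]
    exact Function.iterate_fixed hper k
  have hle : k ≤ m * k := Nat.le_mul_of_pos_left k hm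
  have h2 : f^[m * k - k + k] v = r := by
    rw [Function.iterate_add_apply, hk]
    exact Function.iterate_fixed hr _
  rw [Nat.sub_add_cancel hle] at h2
  rw [h1] at h2
  exact h2

lemma iterate_update_of_ne {f : Fin n → Fin n} {v ℓ c : Fin n}
    (hne : ∀ k, f^[k] v ≠ ℓ) (k : ℕ) : (Function.update f ℓ c)^[k] v = f^[k] v := by
  induction k with
  | zero => rfl
  | succ k ih =>
    rw [Function.iterate_succ_apply', Function.iterate_succ_apply', ih,
      Function.update_of_ne (hne k)]

/-- the leaves: vertices of `s`, other than `r`, with no child in `s`. -/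
def leafSet (s : Finset (Fin n)) (r : Fin n) (f : Fin n → Fin n) : Finset (Fin n) :=
  (s.erase r).filter (fun v => ∀ u ∈ s, u ≠ v → f u ≠ v)

lemma leafSet_nonempty {s : Finset (Fin n)} {r : Fin n} {f : Fin n → Fin n}
    (hf : IsPF s r f) (hr : r ∈ s) (h2 : 2 ≤ s.card) : (leafSet s r f).Nonempty := by
  have hne : (s.erase r).Nonempty := by
    rw [← Finset.card_pos, Finset.card_erase_of_mem hr]
    omega
  obtain ⟨v, hv, hmax⟩ := Finset.exists_max_image (s.erase r) (fun v => depth f r v) hne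
  refine ⟨v, Finset.mem_filter.mpr ⟨hv, ?_⟩⟩
  intro u hu hune hfu
  have hvr : v ≠ r := Finset.ne_of_mem_erase hv
  have hur : u ≠ r := by
    intro h
    rw [h, hf.2.2.1] at hfu
    exact hvr hfu.symm
  have hlt : depth f r (f u) < depth f r u := depth_lt (hf.2.2.2 u hu) hur
  rw [hfu] at hlt
  have := hmax u (Finset.mem_erase.mpr ⟨hur, hu⟩)
  omega

lemma no_iterate_eq_leaf {s : Finset (Fin n)} {r : Fin n} {f : Fin n → Fin n}
    (hf : IsPF s r f) {ℓ : Fin n} (hℓ : ℓ ∈ leafSet s r f) {v : Fin n}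
    (hv : v ∈ s) (hvℓ : v ≠ ℓ) : ∀ k, f^[k] v ≠ ℓ := by
  intro k
  induction k with
  | zero => exact hvℓ
  | succ k ih =>
    rw [Function.iterate_succ_apply']
    have hmem := hf.iterate_mem hv k
    exact (Finset.mem_filter.mp hℓ).2 _ hmem ih

/-- removing a leaf preserves being a parent function. -/
lemma isPF_update_leaf {s : Finset (Fin n)} {r : Fin n} {f : Fin n → Fin n}
    (hf : IsPF s r f) (hr : r ∈ s) {ℓ : Fin n} (hℓ : ℓ ∈ leafSet s r f) :
    IsPF (s.erase ℓ) r (Function.update f ℓ ℓ) := by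
  have hℓr : ℓ ≠ r := Finset.ne_of_mem_erase (Finset.mem_filter.mp hℓ).1
  have hℓs : ℓ ∈ s := Finset.mem_of_mem_erase (Finset.mem_filter.mp hℓ).1
  refine ⟨?_, ?_, ?_, ?_⟩
  · intro v hv
    rcases eq_or_ne v ℓ with rfl | hne
    · exact Function.update_self _ _ _
    · rw [Function.update_of_ne hne]
      exact hf.1 v (fun hmem => hv (Finset.mem_erase.mpr ⟨hne, hmem⟩))
  · intro v hv
    have hvs := Finset.mem_of_mem_erase hv
    have hvℓ := Finset.ne_of_mem_erase hv
    rw [Function.update_of_ne hvℓ]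
    refine Finset.mem_erase.mpr ⟨?_, hf.2.1 v hvs⟩
    exact (Finset.mem_filter.mp hℓ).2 v hvs hvℓ
  · rw [Function.update_of_ne hℓr.symm]
    exact hf.2.2.1
  · intro v hv
    have hvs := Finset.mem_of_mem_erase hv
    have hvℓ := Finset.ne_of_mem_erase hv
    obtain ⟨k, hk⟩ := hf.2.2.2 v hvs
    refine ⟨k, ?_⟩
    rw [iterate_update_of_ne (no_iterate_eq_leaf hf hℓ hvs hvℓ)]
    exact hk


/-- the candidate next leaf for decoding: smallest member of `s`, not `r`, not in `l`. -/
def decLeaf (s : Finset (Fin n)) (r : Fin n) (l : List (Fin n)) : Finset (Fin n) :=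
  (s.erase r).filter (fun x => x ∉ l)

def decode (r : Fin n) (s : Finset (Fin n)) (l : List (Fin n)) : Fin n → Fin n :=
  if _h : s.card ≤ 1 then id
  else if ht : (decLeaf s r l).Nonempty then
    Function.update (decode r (s.erase ((decLeaf s r l).min' ht)) l.tail)
      ((decLeaf s r l).min' ht) (l.headD r)
  else id
termination_by s.card
decreasing_by
  exact Finset.card_erase_lt_of_mem
    (Finset.mem_of_mem_erase (Finset.mem_filter.mp ((decLeaf s r l).min'_mem ht)).1)

def encode (r : Fin n) (s : Finset (Fin n)) (f : Fin n → Fin n) : List (Fin n) :=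
  if _h : s.card ≤ 2 then []
  else if hL : (leafSet s r f).Nonempty then
    f ((leafSet s r f).min' hL) ::
      encode r (s.erase ((leafSet s r f).min' hL))
        (Function.update f ((leafSet s r f).min' hL) ((leafSet s r f).min' hL))
  else []
termination_by s.card
decreasing_by
  exact Finset.card_erase_lt_of_mem
    (Finset.mem_of_mem_erase (Finset.mem_filter.mp ((leafSet s r f).min'_mem hL)).1)

lemma decode_of_card_le {r : Fin n} {s : Finset (Fin n)} {l : List (Fin n)}
    (h : s.card ≤ 1) : decode r s l = id := by
  rw [decode, dif_pos h]

lemma decode_of_nonempty {r : Fin n} {s : Finset (Fin n)} {l : List (Fin n)}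
    (h : ¬ s.card ≤ 1) (ht : (decLeaf s r l).Nonempty) :
    decode r s l = Function.update (decode r (s.erase ((decLeaf s r l).min' ht)) l.tail)
      ((decLeaf s r l).min' ht) (l.headD r) := by
  rw [decode, dif_neg h, dif_pos ht]

lemma encode_of_card_le {r : Fin n} {s : Finset (Fin n)} {f : Fin n → Fin n}
    (h : s.card ≤ 2) : encode r s f = [] := by
  rw [encode, dif_pos h]

lemma encode_of_nonempty {r : Fin n} {s : Finset (Fin n)} {f : Fin n → Fin n}
    (h : ¬ s.card ≤ 2) (hL : (leafSet s r f).Nonempty) :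
    encode r s f = f ((leafSet s r f).min' hL) ::
      encode r (s.erase ((leafSet s r f).min' hL))
        (Function.update f ((leafSet s r f).min' hL) ((leafSet s r f).min' hL)) := by
  rw [encode, dif_neg h, dif_pos hL]

lemma decLeaf_nonempty {r : Fin n} {s : Finset (Fin n)} {l : List (Fin n)}
    (hr : r ∈ s) (h2 : 2 ≤ s.card) (hlen : l.length = s.card - 2) :
    (decLeaf s r l).Nonempty := by
  by_contra hemp
  rw [Finset.not_nonempty_iff_eq_empty] at hemp
  have hsub : s.erase r ⊆ l.toFinset := by
    intro x hx
    by_contra hxl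
    have : x ∈ decLeaf s r l := Finset.mem_filter.mpr ⟨hx, by simpa using hxl⟩
    simp [hemp] at this
  have h1 := Finset.card_le_card hsub
  have h3 := l.toFinset_card_le
  rw [Finset.card_erase_of_mem hr] at h1
  omega


lemma decode_isPF {r : Fin n} :
    ∀ (N : ℕ) (s : Finset (Fin n)) (l : List (Fin n)), s.card ≤ N → r ∈ s →
      l.length = s.card - 2 → (∀ x ∈ l, x ∈ s) → IsPF s r (decode r s l) := by
  intro N
  induction N with
  | zero =>
    intro s l hN hr hlen hmem
    rw [decode_of_card_le (by omega)]
    have hcard : s.card = 0 := by omega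
    exact absurd (Finset.card_pos.mpr ⟨r, hr⟩) (by omega)
  | succ N IH =>
    intro s l hN hr hlen hmem
    by_cases h1 : s.card ≤ 1
    · rw [decode_of_card_le h1]
      have hsing : ∀ v ∈ s, v = r := by
        intro v hv
        exact Finset.card_le_one.mp h1 v hv r hr
      exact ⟨fun v _ => rfl, fun v hv => hv, rfl, fun v hv => ⟨0, hsing v hv⟩⟩
    · have h2 : 2 ≤ s.card := by omega
      have ht := decLeaf_nonempty hr h2 hlen
      rw [decode_of_nonempty h1 ht]
      set ℓ := (decLeaf s r l).min' ht with hℓdef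
      have hℓmem : ℓ ∈ decLeaf s r l := (decLeaf s r l).min'_mem ht
      have hℓer : ℓ ∈ s.erase r := (Finset.mem_filter.mp hℓmem).1
      have hℓnl : ℓ ∉ l := by
        have := (Finset.mem_filter.mp hℓmem).2
        simpa using this
      have hℓr : ℓ ≠ r := Finset.ne_of_mem_erase hℓer
      have hℓs : ℓ ∈ s := Finset.mem_of_mem_erase hℓer
      have hr' : r ∈ s.erase ℓ := Finset.mem_erase.mpr ⟨hℓr.symm, hr⟩
      have hcard' : (s.erase ℓ).card ≤ N := by
        rw [Finset.card_erase_of_mem hℓs]; omega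
      have hlen' : l.tail.length = (s.erase ℓ).card - 2 := by
        rw [List.length_tail, hlen, Finset.card_erase_of_mem hℓs]
        omega
      have hmem' : ∀ x ∈ l.tail, x ∈ s.erase ℓ := by
        intro x hx
        have hxl := List.mem_of_mem_tail hx
        exact Finset.mem_erase.mpr ⟨fun h => hℓnl (h ▸ hxl), hmem x hxl⟩
      have hpf' := IH (s.erase ℓ) l.tail hcard' hr' hlen' hmem'
      set g' := decode r (s.erase ℓ) l.tail with hg'
      have hcs : l.headD r ∈ s.erase ℓ := by
        cases l with
        | nil => exact hr'
        | cons a t =>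
          refine Finset.mem_erase.mpr ⟨?_, hmem a (List.mem_cons_self)⟩
          intro h
          exact hℓnl (h ▸ List.mem_cons_self)
      refine ⟨?_, ?_, ?_, ?_⟩
      · intro v hv
        have hvℓ : v ≠ ℓ := fun h => hv (h ▸ hℓs)
        rw [Function.update_of_ne hvℓ]
        exact hpf'.1 v (fun h => hv (Finset.mem_of_mem_erase h))
      · intro v hv
        rcases eq_or_ne v ℓ with rfl | hne
        · rw [Function.update_self]
          exact Finset.mem_of_mem_erase hcs
        · rw [Function.update_of_ne hne]
          exact Finset.mem_of_mem_erase (hpf'.2.1 v (Finset.mem_erase.mpr ⟨hne, hv⟩))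
      · rw [Function.update_of_ne hℓr.symm]
        exact hpf'.2.2.1
      · have hreach' : ∀ v ∈ s.erase ℓ,
            ∃ k, (Function.update g' ℓ (l.headD r))^[k] v = r := by
          intro v hv
          obtain ⟨k, hk⟩ := hpf'.2.2.2 v hv
          refine ⟨k, ?_⟩
          rw [iterate_update_of_ne (fun k => ?_)]
          · exact hk
          · intro hcon
            have := hpf'.iterate_mem hv k
            rw [hcon] at this
            exact absurd (Finset.mem_erase.mp this).1 (by simp)
        intro v hv
        rcases eq_or_ne v ℓ with rfl | hne
        · obtain ⟨k, hk⟩ := hreach' (l.headD r) hcs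
          refine ⟨k + 1, ?_⟩
          rw [Function.iterate_succ_apply, Function.update_self]
          exact hk
        · exact hreach' v (Finset.mem_erase.mpr ⟨hne, hv⟩)


lemma decode_child_iff {r : Fin n} :
    ∀ (N : ℕ) (s : Finset (Fin n)) (l : List (Fin n)), s.card ≤ N → r ∈ s →
      l.length = s.card - 2 → (∀ x ∈ l, x ∈ s) →
      ∀ v ∈ s, v ≠ r → ((∃ u ∈ s, u ≠ v ∧ decode r s l u = v) ↔ v ∈ l) := by
  intro N
  induction N with
  | zero =>
    intro s l hN hr _ _
    exact absurd (Finset.card_pos.mpr ⟨r, hr⟩) (by omega)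
  | succ N IH =>
    intro s l hN hr hlen hmem v hv hvr
    by_cases h1 : s.card ≤ 1
    · exact absurd (Finset.card_le_one.mp h1 v hv r hr) hvr
    · have h2 : 2 ≤ s.card := by omega
      have ht := decLeaf_nonempty hr h2 hlen
      rw [decode_of_nonempty h1 ht]
      set ℓ := (decLeaf s r l).min' ht with hℓdef
      have hℓmem : ℓ ∈ decLeaf s r l := (decLeaf s r l).min'_mem ht
      have hℓer : ℓ ∈ s.erase r := (Finset.mem_filter.mp hℓmem).1
      have hℓnl : ℓ ∉ l := by simpa using (Finset.mem_filter.mp hℓmem).2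
      have hℓr : ℓ ≠ r := Finset.ne_of_mem_erase hℓer
      have hℓs : ℓ ∈ s := Finset.mem_of_mem_erase hℓer
      have hr' : r ∈ s.erase ℓ := Finset.mem_erase.mpr ⟨hℓr.symm, hr⟩
      have hcard' : (s.erase ℓ).card ≤ N := by
        rw [Finset.card_erase_of_mem hℓs]; omega
      have hlen' : l.tail.length = (s.erase ℓ).card - 2 := by
        rw [List.length_tail, hlen, Finset.card_erase_of_mem hℓs]; omega
      have hmem' : ∀ x ∈ l.tail, x ∈ s.erase ℓ := by
        intro x hx
        have hxl := List.mem_of_mem_tail hx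
        exact Finset.mem_erase.mpr ⟨fun h => hℓnl (h ▸ hxl), hmem x hxl⟩
      have hpf' := decode_isPF N (s.erase ℓ) l.tail hcard' hr' hlen' hmem'
      set g' := decode r (s.erase ℓ) l.tail with hg'
      rcases eq_or_ne v ℓ with rfl | hvℓ
      · constructor
        · rintro ⟨u, hu, hune, hgu⟩
          rw [Function.update_of_ne hune] at hgu
          have := hpf'.2.1 u (Finset.mem_erase.mpr ⟨hune, hu⟩)
          rw [hgu] at this
          exact absurd (Finset.mem_erase.mp this).1 (by simp)
        · intro h
          exact absurd h hℓnl
      · cases l with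
        | nil =>
          exfalso
          have hcard2 : s.card = 2 := by
            have : ([] : List (Fin n)).length = 0 := rfl
            omega
          have hver : v ∈ s.erase r := Finset.mem_erase.mpr ⟨hvr, hv⟩
          have : (s.erase r).card ≤ 1 := by
            rw [Finset.card_erase_of_mem hr]; omega
          exact hvℓ (Finset.card_le_one.mp this v hver ℓ hℓer)
        | cons a t =>
          have hIH := IH (s.erase ℓ) t hcard' hr' hlen' hmem' v
            (Finset.mem_erase.mpr ⟨hvℓ, hv⟩) hvr
          rw [show decode r (s.erase ℓ) t = g' from rfl] at hIH
          simp only [List.mem_cons]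
          constructor
          · rintro ⟨u, hu, hune, hgu⟩
            rcases eq_or_ne u ℓ with rfl | huℓ
            · rw [Function.update_self] at hgu
              exact Or.inl hgu.symm
            · rw [Function.update_of_ne huℓ] at hgu
              exact Or.inr (hIH.mp ⟨u, Finset.mem_erase.mpr ⟨huℓ, hu⟩, hune, hgu⟩)
          · rintro (rfl | hvt)
            · exact ⟨ℓ, hℓs, hvℓ.symm, by rw [Function.update_self]; rfl⟩
            · obtain ⟨u, hu, hune, hgu⟩ := hIH.mpr hvt
              refine ⟨u, Finset.mem_of_mem_erase hu, hune, ?_⟩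
              rw [Function.update_of_ne (Finset.ne_of_mem_erase hu)]
              exact hgu


lemma encode_valid {r : Fin n} :
    ∀ (N : ℕ) (s : Finset (Fin n)) (f : Fin n → Fin n), s.card ≤ N → r ∈ s → IsPF s r f →
      (encode r s f).length = s.card - 2 ∧ ∀ x ∈ encode r s f, x ∈ s := by
  intro N
  induction N with
  | zero =>
    intro s f hN hr _
    exact absurd (Finset.card_pos.mpr ⟨r, hr⟩) (by omega)
  | succ N IH =>
    intro s f hN hr hf
    by_cases h2 : s.card ≤ 2
    · rw [encode_of_card_le h2]
      constructor
      · simp only [List.length_nil]; omega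
      · intro x hx; simp at hx
    · have hL := leafSet_nonempty hf hr (by omega)
      rw [encode_of_nonempty h2 hL]
      set ℓ := (leafSet s r f).min' hL with hℓdef
      have hℓmem : ℓ ∈ leafSet s r f := (leafSet s r f).min'_mem hL
      have hℓer : ℓ ∈ s.erase r := (Finset.mem_filter.mp hℓmem).1
      have hℓr : ℓ ≠ r := Finset.ne_of_mem_erase hℓer
      have hℓs : ℓ ∈ s := Finset.mem_of_mem_erase hℓer
      have hr' : r ∈ s.erase ℓ := Finset.mem_erase.mpr ⟨hℓr.symm, hr⟩
      have hcard' : (s.erase ℓ).card ≤ N := by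
        rw [Finset.card_erase_of_mem hℓs]; omega
      have hpf' := isPF_update_leaf hf hr hℓmem
      obtain ⟨ih1, ih2⟩ := IH (s.erase ℓ) _ hcard' hr' hpf'
      constructor
      · rw [List.length_cons, ih1, Finset.card_erase_of_mem hℓs]
        omega
      · intro x hx
        rcases List.mem_cons.mp hx with rfl | hx'
        · exact hf.2.1 ℓ hℓs
        · exact Finset.mem_of_mem_erase (ih2 x hx')

lemma isPF_unique {s : Finset (Fin n)} {r : Fin n} {f g : Fin n → Fin n}
    (hf : IsPF s r f) (hg : IsPF s r g) (hr : r ∈ s) (h2 : s.card ≤ 2) : f = g := by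
  have key : ∀ h : Fin n → Fin n, IsPF s r h → ∀ v, h v = if v ∈ s ∧ v ≠ r then r else v := by
    intro h hh v
    split_ifs with hcond
    · obtain ⟨hv, hvr⟩ := hcond
      have h1 : h v ∈ s := hh.2.1 v hv
      have h2' : h v ≠ v := hh.ne_self hv hvr
      have hsub : ({v, r} : Finset (Fin n)) ⊆ s := by
        intro x hx
        rcases Finset.mem_insert.mp hx with rfl | hx'
        · exact hv
        · rw [Finset.mem_singleton.mp hx']; exact hr
      have hcard : ({v, r} : Finset (Fin n)).card = 2 := by
        rw [Finset.card_insert_of_notMem (by simp [hvr]), Finset.card_singleton]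
      have hseq : s = {v, r} :=
        (Finset.eq_of_subset_of_card_le hsub (by omega)).symm
      rw [hseq] at h1
      rcases Finset.mem_insert.mp h1 with h' | h'
      · exact absurd h' h2'
      · exact Finset.mem_singleton.mp h'
    · push_neg at hcond
      by_cases hv : v ∈ s
      · have := hcond hv
        rw [this]; exact hh.2.2.1
      · exact hh.1 v hv
  funext v
  rw [key f hf v, key g hg v]

lemma encode_child_iff {r : Fin n} :
    ∀ (N : ℕ) (s : Finset (Fin n)) (f : Fin n → Fin n), s.card ≤ N → r ∈ s → IsPF s r f →
      ∀ v ∈ s, v ≠ r → ((∃ u ∈ s, u ≠ v ∧ f u = v) ↔ v ∈ encode r s f) := by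
  intro N
  induction N with
  | zero =>
    intro s f hN hr _
    exact absurd (Finset.card_pos.mpr ⟨r, hr⟩) (by omega)
  | succ N IH =>
    intro s f hN hr hf v hv hvr
    by_cases h2 : s.card ≤ 2
    · rw [encode_of_card_le h2]
      simp only [List.not_mem_nil, iff_false]
      rintro ⟨u, hu, hune, hfu⟩
      have hur : u = r := by
        by_contra hur
        have hsub : ({u, v, r} : Finset (Fin n)) ⊆ s := by
          intro x hx
          rcases Finset.mem_insert.mp hx with rfl | hx'
          · exact hu
          · rcases Finset.mem_insert.mp hx' with rfl | hx''
            · exact hv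
            · rw [Finset.mem_singleton.mp hx'']; exact hr
        have hcard : ({u, v, r} : Finset (Fin n)).card = 3 := by
          rw [Finset.card_insert_of_notMem (by simp [hune, hur]),
            Finset.card_insert_of_notMem (by simp [hvr]), Finset.card_singleton]
        have := Finset.card_le_card hsub
        omega
      rw [hur, hf.2.2.1] at hfu
      exact hvr hfu.symm
    · have hL := leafSet_nonempty hf hr (by omega)
      rw [encode_of_nonempty h2 hL]
      set ℓ := (leafSet s r f).min' hL with hℓdef
      have hℓmem : ℓ ∈ leafSet s r f := (leafSet s r f).min'_mem hL
      have hℓer : ℓ ∈ s.erase r := (Finset.mem_filter.mp hℓmem).1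
      have hℓr : ℓ ≠ r := Finset.ne_of_mem_erase hℓer
      have hℓs : ℓ ∈ s := Finset.mem_of_mem_erase hℓer
      have hr' : r ∈ s.erase ℓ := Finset.mem_erase.mpr ⟨hℓr.symm, hr⟩
      have hcard' : (s.erase ℓ).card ≤ N := by
        rw [Finset.card_erase_of_mem hℓs]; omega
      have hpf' := isPF_update_leaf hf hr hℓmem
      rcases eq_or_ne v ℓ with rfl | hvℓ
      · constructor
        · rintro ⟨u, hu, hune, hfu⟩
          exact absurd hfu ((Finset.mem_filter.mp hℓmem).2 u hu hune)
        · intro hcon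
          rcases List.mem_cons.mp hcon with h' | h'
          · exact absurd h'.symm (hf.ne_self hℓs hℓr)
          · have := (encode_valid N (s.erase ℓ) _ hcard' hr' hpf').2 ℓ h'
            exact absurd (Finset.mem_erase.mp this).1 (by simp)
      · have hv' : v ∈ s.erase ℓ := Finset.mem_erase.mpr ⟨hvℓ, hv⟩
        have hIH := IH (s.erase ℓ) _ hcard' hr' hpf' v hv' hvr
        simp only [List.mem_cons]
        constructor
        · rintro ⟨u, hu, hune, hfu⟩
          rcases eq_or_ne u ℓ with rfl | huℓ
          · exact Or.inl hfu.symm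
          · refine Or.inr (hIH.mp ⟨u, Finset.mem_erase.mpr ⟨huℓ, hu⟩, hune, ?_⟩)
            rw [Function.update_of_ne huℓ]
            exact hfu
        · rintro (rfl | hcode)
          · exact ⟨ℓ, hℓs, hvℓ.symm, rfl⟩
          · obtain ⟨u, hu, hune, hfu⟩ := hIH.mpr hcode
            refine ⟨u, Finset.mem_of_mem_erase hu, hune, ?_⟩
            rw [Function.update_of_ne (Finset.ne_of_mem_erase hu)] at hfu
            exact hfu


lemma encode_decode {r : Fin n} :
    ∀ (N : ℕ) (s : Finset (Fin n)) (l : List (Fin n)), s.card ≤ N → r ∈ s →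
      l.length = s.card - 2 → (∀ x ∈ l, x ∈ s) → encode r s (decode r s l) = l := by
  intro N
  induction N with
  | zero =>
    intro s l hN hr _ _
    exact absurd (Finset.card_pos.mpr ⟨r, hr⟩) (by omega)
  | succ N IH =>
    intro s l hN hr hlen hmem
    by_cases h2 : s.card ≤ 2
    · rw [encode_of_card_le h2]
      have : l.length = 0 := by omega
      exact (List.length_eq_zero_iff.mp this).symm
    · have h1 : ¬ s.card ≤ 1 := by omega
      have ht := decLeaf_nonempty hr (by omega) hlen
      set ℓ := (decLeaf s r l).min' ht with hℓdef
      have hℓmem : ℓ ∈ decLeaf s r l := (decLeaf s r l).min'_mem ht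
      have hℓer : ℓ ∈ s.erase r := (Finset.mem_filter.mp hℓmem).1
      have hℓnl : ℓ ∉ l := by simpa using (Finset.mem_filter.mp hℓmem).2
      have hℓr : ℓ ≠ r := Finset.ne_of_mem_erase hℓer
      have hℓs : ℓ ∈ s := Finset.mem_of_mem_erase hℓer
      have hr' : r ∈ s.erase ℓ := Finset.mem_erase.mpr ⟨hℓr.symm, hr⟩
      have hcard' : (s.erase ℓ).card ≤ N := by
        rw [Finset.card_erase_of_mem hℓs]; omega
      have hlen' : l.tail.length = (s.erase ℓ).card - 2 := by
        rw [List.length_tail, hlen, Finset.card_erase_of_mem hℓs]; omega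
      have hmem' : ∀ x ∈ l.tail, x ∈ s.erase ℓ := by
        intro x hx
        have hxl := List.mem_of_mem_tail hx
        exact Finset.mem_erase.mpr ⟨fun h => hℓnl (h ▸ hxl), hmem x hxl⟩
      cases l with
      | nil => exact absurd hlen (by simp; omega)
      | cons a t =>
        set g := decode r s (a :: t) with hgdef
        have hgeq : g = Function.update (decode r (s.erase ℓ) t) ℓ a := by
          rw [hgdef, decode_of_nonempty h1 ht]
          rfl
        have hpfg : IsPF s r g := decode_isPF (N + 1) s (a :: t) hN hr hlen hmem
        have hpf' : IsPF (s.erase ℓ) r (decode r (s.erase ℓ) t) :=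
          decode_isPF N (s.erase ℓ) t hcard' hr' hlen' hmem'
        have hset : leafSet s r g = decLeaf s r (a :: t) := by
          ext v
          simp only [leafSet, decLeaf, Finset.mem_filter, and_congr_right_iff]
          intro hver
          have hvs := Finset.mem_of_mem_erase hver
          have hvr := Finset.ne_of_mem_erase hver
          have hchar := decode_child_iff (N + 1) s (a :: t) hN hr hlen hmem v hvs hvr
          rw [← hgdef] at hchar
          constructor
          · intro hall hcon
            obtain ⟨u, hu, hune, hgu⟩ := hchar.mpr hcon
            exact hall u hu hune hgu
          · intro hnl u hu hune hgu
            exact hnl (hchar.mp ⟨u, hu, hune, hgu⟩)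
        have hLg : (leafSet s r g).Nonempty := by rw [hset]; exact ht
        rw [encode_of_nonempty h2 hLg]
        have hℓe : (leafSet s r g).min' hLg = ℓ := by
          simp only [hset, hℓdef]
        rw [hℓe]
        have hga : g ℓ = a := by rw [hgeq, Function.update_self]
        have hupd : Function.update g ℓ ℓ = decode r (s.erase ℓ) t := by
          rw [hgeq, Function.update_idem]
          have hdl : decode r (s.erase ℓ) t ℓ = ℓ := hpf'.1 ℓ (by simp)
          funext x
          rcases eq_or_ne x ℓ with rfl | hx
          · rw [Function.update_self]; exact hdl.symm
          · rw [Function.update_of_ne hx]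
        rw [hga, hupd]
        have hIH := IH (s.erase ℓ) t hcard' hr' hlen' hmem'
        rw [hIH]

lemma decode_encode {r : Fin n} :
    ∀ (N : ℕ) (s : Finset (Fin n)) (f : Fin n → Fin n), s.card ≤ N → r ∈ s → IsPF s r f →
      decode r s (encode r s f) = f := by
  intro N
  induction N with
  | zero =>
    intro s f hN hr _
    exact absurd (Finset.card_pos.mpr ⟨r, hr⟩) (by omega)
  | succ N IH =>
    intro s f hN hr hf
    by_cases h2 : s.card ≤ 2
    · rw [encode_of_card_le h2]
      have hdpf : IsPF s r (decode r s []) :=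
        decode_isPF (N + 1) s [] hN hr (by simp; omega) (by simp)
      exact isPF_unique hdpf hf hr h2
    · have h1 : ¬ s.card ≤ 1 := by omega
      have hL := leafSet_nonempty hf hr (by omega)
      set ℓ := (leafSet s r f).min' hL with hℓdef
      have hℓmem : ℓ ∈ leafSet s r f := (leafSet s r f).min'_mem hL
      have hℓer : ℓ ∈ s.erase r := (Finset.mem_filter.mp hℓmem).1
      have hℓr : ℓ ≠ r := Finset.ne_of_mem_erase hℓer
      have hℓs : ℓ ∈ s := Finset.mem_of_mem_erase hℓer
      have hr' : r ∈ s.erase ℓ := Finset.mem_erase.mpr ⟨hℓr.symm, hr⟩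
      have hcard' : (s.erase ℓ).card ≤ N := by
        rw [Finset.card_erase_of_mem hℓs]; omega
      have hpf' := isPF_update_leaf hf hr hℓmem
      have hcode := encode_of_nonempty h2 hL
      rw [← hℓdef] at hcode
      have hset : decLeaf s r (encode r s f) = leafSet s r f := by
        ext v
        simp only [leafSet, decLeaf, Finset.mem_filter, and_congr_right_iff]
        intro hver
        have hvs := Finset.mem_of_mem_erase hver
        have hvr := Finset.ne_of_mem_erase hver
        have hchar := encode_child_iff (N + 1) s f hN hr hf v hvs hvr
        constructor
        · intro hnc u hu hune hfu
          exact hnc (hchar.mp ⟨u, hu, hune, hfu⟩)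
        · intro hall hcon
          obtain ⟨u, hu, hune, hfu⟩ := hchar.mpr hcon
          exact hall u hu hune hfu
      have ht : (decLeaf s r (encode r s f)).Nonempty := by rw [hset]; exact hL
      rw [decode_of_nonempty h1 ht]
      have hℓe : (decLeaf s r (encode r s f)).min' ht = ℓ := by
        simp only [hset, hℓdef]
      rw [hℓe]
      have htail : (encode r s f).tail = encode r (s.erase ℓ) (Function.update f ℓ ℓ) := by
        rw [hcode, List.tail_cons]
      have hhead : (encode r s f).headD r = f ℓ := by rw [hcode, List.headD_cons]
      rw [htail, hhead]
      have hIH := IH (s.erase ℓ) _ hcard' hr' hpf'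
      rw [hIH, Function.update_idem, Function.update_eq_self]


abbrev CodeT (s : Finset (Fin n)) (m : ℕ) : Type _ :=
  {l : List (Fin n) // l.length = m ∧ ∀ x ∈ l, x ∈ s}

lemma codeT_card (s : Finset (Fin n)) : ∀ m : ℕ, Nat.card (CodeT s m) = s.card ^ m := by
  intro m
  induction m with
  | zero =>
    have e : CodeT s 0 ≃ PUnit.{1} := {
      toFun := fun _ => PUnit.unit
      invFun := fun _ => ⟨[], rfl, by simp⟩
      left_inv := by
        rintro ⟨l, hl, hm⟩
        have : l = [] := List.length_eq_zero_iff.mp hl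
        subst this
        rfl
      right_inv := fun _ => rfl }
    rw [Nat.card_congr e]
    simp
  | succ m IH =>
    have hbij : Function.Bijective (fun (p : ↥s × CodeT s m) =>
        (⟨(p.1 : Fin n) :: p.2.1, by
          refine ⟨by rw [List.length_cons, p.2.2.1], ?_⟩
          intro x hx
          rcases List.mem_cons.mp hx with rfl | hx'
          · exact p.1.2
          · exact p.2.2.2 x hx'⟩ : CodeT s (m + 1))) := by
      constructor
      · rintro ⟨a, t⟩ ⟨a', t'⟩ heq
        have h := congrArg Subtype.val heq
        simp only [List.cons.injEq] at h
        exact Prod.ext (Subtype.ext h.1) (Subtype.ext h.2)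
      · rintro ⟨l, hl, hm⟩
        cases l with
        | nil => simp at hl
        | cons a t =>
          exact ⟨⟨⟨a, hm a (List.mem_cons_self)⟩,
            ⟨t, by simpa using hl, fun x hx => hm x (List.mem_cons_of_mem a hx)⟩⟩,
            Subtype.ext rfl⟩
    rw [Nat.card_congr (Equiv.ofBijective _ hbij).symm, Nat.card_prod, IH]
    have hcs : Nat.card ↥s = s.card := by
      rw [Nat.card_eq_fintype_card, Fintype.card_coe]
    rw [hcs, pow_succ, mul_comm]

/-- Prüfer bijection: counting parent functions. -/
lemma pf_card {s : Finset (Fin n)} {r : Fin n} (hr : r ∈ s) :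
    Nat.card {f : Fin n → Fin n // IsPF s r f} = s.card ^ (s.card - 2) := by
  have e : {f : Fin n → Fin n // IsPF s r f} ≃ CodeT s (s.card - 2) := {
    toFun := fun p => ⟨encode r s p.1,
      (encode_valid s.card s p.1 le_rfl hr p.2).1,
      (encode_valid s.card s p.1 le_rfl hr p.2).2⟩
    invFun := fun c => ⟨decode r s c.1, decode_isPF s.card s c.1 le_rfl hr c.2.1 c.2.2⟩
    left_inv := fun p => Subtype.ext (decode_encode s.card s p.1 le_rfl hr p.2)
    right_inv := fun c => Subtype.ext (encode_decode s.card s c.1 le_rfl hr c.2.1 c.2.2) }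
  rw [Nat.card_congr e, codeT_card]


/-- The graph of a parent function: edges `v ~ f v`. -/
def pfGraph (f : Fin n → Fin n) : SimpleGraph (Fin n) where
  Adj u v := u ≠ v ∧ (f u = v ∨ f v = u)
  symm := ⟨fun u v h => ⟨h.1.symm, h.2.symm⟩⟩
  loopless := ⟨fun u h => h.1 rfl⟩

lemma pfGraph_adj {f : Fin n → Fin n} {u v : Fin n} :
    (pfGraph f).Adj u v ↔ u ≠ v ∧ (f u = v ∨ f v = u) := Iff.rfl

lemma pfGraph_reachable {f : Fin n → Fin n} {r : Fin n}
    (hf : IsPF Finset.univ r f) (v : Fin n) : (pfGraph f).Reachable v r := by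
  obtain ⟨k, hk⟩ := hf.2.2.2 v (Finset.mem_univ v)
  induction k generalizing v with
  | zero => exact hk ▸ Reachable.refl v
  | succ k ih =>
    rcases eq_or_ne v r with heq | hvr
    · exact heq ▸ Reachable.refl v
    · have hadj : (pfGraph f).Adj v (f v) :=
        ⟨(hf.ne_self (Finset.mem_univ v) hvr).symm, Or.inl rfl⟩
      exact hadj.reachable.trans (ih (f v) (by rwa [← Function.iterate_succ_apply]))

lemma pfGraph_connected {f : Fin n → Fin n} {r : Fin n}
    (hf : IsPF Finset.univ r f) : (pfGraph f).Connected := by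
  have : Nonempty (Fin n) := ⟨r⟩
  exact ⟨fun u v => (pfGraph_reachable hf u).trans (pfGraph_reachable hf v).symm⟩

lemma walk_support_get? {α : Type*} {G : SimpleGraph α} {u v : α} (p : G.Walk u v) :
    ∀ i ≤ p.length, p.support[i]? = some (p.getVert i) := by
  induction p with
  | nil =>
    intro i hi
    have : i = 0 := by simpa using hi
    subst this
    rfl
  | cons h q ih =>
    intro i hi
    cases i with
    | zero => rfl
    | succ i =>
      rw [Walk.support_cons, List.getElem?_cons_succ, Walk.getVert_cons_succ]
      exact ih i (by simpa using hi)

lemma pfGraph_acyclic {f : Fin n → Fin n} {r : Fin n}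
    (hf : IsPF Finset.univ r f) : (pfGraph f).IsAcyclic := by
  intro v c hc
  have hvsup : v ∈ c.support.toFinset := List.mem_toFinset.mpr c.start_mem_support
  obtain ⟨x, hxmem, hxmax⟩ :=
    Finset.exists_max_image c.support.toFinset (fun y => depth f r y) ⟨v, hvsup⟩
  have hx : x ∈ c.support := List.mem_toFinset.mp hxmem
  have hc'cyc : (c.rotate x hx).IsCycle := hc.rotate hx
  set c' := c.rotate x hx with hc'def
  have hrot := Walk.support_rotate c x hx
  have hsupp : ∀ y ∈ c'.support, depth f r y ≤ depth f r x := by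
    intro y hy
    rw [c'.support_eq_cons] at hy
    rcases List.mem_cons.mp hy with rfl | hy'
    · exact le_rfl
    · exact hxmax y (List.mem_toFinset.mpr (List.mem_of_mem_tail (hrot.mem_iff.mp hy')))
  have hlen3 : 3 ≤ c'.length := hc'cyc.three_le_length
  set a := c'.getVert 1 with hadef
  set b := c'.getVert (c'.length - 1) with hbdef
  have hadj_xa : (pfGraph f).Adj x a := by
    have h0 := c'.adj_getVert_succ (show 0 < c'.length by omega)
    rwa [Walk.getVert_zero] at h0
  have hadj_bx : (pfGraph f).Adj b x := by
    have h0 := c'.adj_getVert_succ (show c'.length - 1 < c'.length by omega)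
    rwa [Nat.sub_add_cancel (show 1 ≤ c'.length by omega), Walk.getVert_length] at h0
  have hamem : a ∈ c'.support := Walk.mem_support_iff_exists_getVert.mpr ⟨1, rfl, by omega⟩
  have hbmem : b ∈ c'.support := Walk.mem_support_iff_exists_getVert.mpr ⟨c'.length - 1, rfl, by omega⟩
  -- the parent of the deepest vertex is both a and b
  have hkey : ∀ y : Fin n, (pfGraph f).Adj x y → y ∈ c'.support → f x = y := by
    intro y hadj hymem
    rcases hadj.2 with h | h
    · exact h
    · exfalso
      have hyr : y ≠ r := by
        intro hcon
        rw [hcon, hf.2.2.1] at h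
        exact hadj.1 (h ▸ hcon).symm
      have hlt : depth f r (f y) < depth f r y :=
        depth_lt (hf.2.2.2 y (Finset.mem_univ y)) hyr
      rw [h] at hlt
      have := hsupp y hymem
      omega
  have hab : a = b := by
    rw [← hkey a hadj_xa hamem, ← hkey b hadj_bx.symm hbmem]
  -- but a and b are distinct entries of the nodup tail
  have hget := walk_support_get? c'
  have htail : c'.support = x :: c'.support.tail := c'.support_eq_cons
  have hgetT : ∀ i, i + 1 ≤ c'.length → c'.support.tail[i]? = some (c'.getVert (i + 1)) := by
    intro i hi
    have := hget (i + 1) (by omega)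
    rw [htail, List.getElem?_cons_succ] at this
    exact this
  have h1 : c'.support.tail[0]? = some a := hgetT 0 (by omega)
  have h2 : c'.support.tail[c'.length - 2]? = some b := by
    have := hgetT (c'.length - 2) (by omega)
    rw [show c'.length - 2 + 1 = c'.length - 1 by omega] at this
    exact this
  have hlen : c'.support.tail.length = c'.length := by
    have h := c'.length_support
    rw [c'.support_eq_cons, List.length_cons] at h
    omega
  have h0len : (0 : ℕ) < c'.support.tail.length := by omega
  have heq : c'.support.tail[0]? = c'.support.tail[c'.length - 2]? := by
    rw [h1, h2, hab]
  have := (List.getElem?_inj h0len hc'cyc.support_nodup).mp heq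
  omega


lemma pfGraph_edge_ncard {f : Fin n → Fin n} {r : Fin n} (hf : IsPF Finset.univ r f) :
    (pfGraph f).edgeSet.ncard = n - 1 := by
  classical
  have hset : (pfGraph f).edgeSet =
      ↑((Finset.univ.erase r).image (fun v => s(v, f v))) := by
    ext e
    induction e using Sym2.ind with
    | _ u v =>
      simp only [mem_edgeSet, Finset.coe_image, Set.mem_image, Finset.mem_coe,
        Finset.mem_erase, Finset.mem_univ, and_true]
      constructor
      · rintro ⟨hne, h | h⟩
        · refine ⟨u, ?_, by rw [h]⟩
          intro hur
          have hvr : v = r := by rw [← h, hur, hf.2.2.1]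
          exact hne (by rw [hur, hvr])
        · refine ⟨v, ?_, by rw [h, Sym2.eq_swap]⟩
          intro hvr
          have hur : u = r := by rw [← h, hvr, hf.2.2.1]
          exact hne (by rw [hur, hvr])
      · rintro ⟨w, hwr, heq⟩
        have hadj : (pfGraph f).Adj w (f w) :=
          ⟨(hf.ne_self (Finset.mem_univ w) hwr).symm, Or.inl rfl⟩
        have hmem : s(w, f w) ∈ (pfGraph f).edgeSet := hadj
        rw [heq] at hmem
        exact hmem
  rw [hset, Set.ncard_coe_finset]
  rw [Finset.card_image_of_injOn ?_, Finset.card_erase_of_mem (Finset.mem_univ r),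
    Finset.card_univ, Fintype.card_fin]
  intro v hv w hw heq
  rcases Sym2.eq_iff.mp heq with ⟨h1, _⟩ | ⟨h1, h2⟩
  · exact h1
  · exfalso
    have hcirc : f (f w) = w := by rw [← h1]; exact h2
    have hper : f^[2] w = w := by
      rw [show (2:ℕ) = 1 + 1 from rfl, Function.iterate_add_apply]
      exact hcirc
    have := eq_root_of_periodic hf.2.2.1 (hf.2.2.2 w (Finset.mem_univ w))
      (by norm_num) hper
    exact (Finset.mem_erase.mp hw).1 this

lemma pfGraph_injective {f g : Fin n → Fin n} {r : Fin n}
    (hf : IsPF Finset.univ r f) (hg : IsPF Finset.univ r g)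
    (h : pfGraph f = pfGraph g) : f = g := by
  have key : ∀ N : ℕ, ∀ v, depth f r v = N → f v = g v := by
    intro N
    induction N using Nat.strong_induction_on with
    | _ N ih =>
      intro v hd
      rcases eq_or_ne v r with rfl | hvr
      · rw [hf.2.2.1, hg.2.2.1]
      by_contra hne
      have hdec : depth f r (f v) < depth f r v :=
        depth_lt (hf.2.2.2 v (Finset.mem_univ v)) hvr
      have hfu_eq : f (f v) = g (f v) := ih _ (hd ▸ hdec) (f v) rfl
      have hadjf : (pfGraph f).Adj v (f v) :=
        ⟨(hf.ne_self (Finset.mem_univ v) hvr).symm, Or.inl rfl⟩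
      have hadj : (pfGraph g).Adj v (f v) := h ▸ hadjf
      rcases hadj.2 with h' | h'
      · exact hne h'.symm
      · have hcirc : f (f v) = v := by rw [hfu_eq]; exact h'
        have hper : f^[2] v = v := by
          rw [show (2:ℕ) = 1 + 1 from rfl, Function.iterate_add_apply]
          exact hcirc
        exact hvr (eq_root_of_periodic hf.2.2.1 (hf.2.2.2 v (Finset.mem_univ v))
          (by norm_num) hper)
  funext v
  exact key _ v rfl

lemma pfGraph_isTree {f : Fin n → Fin n} {r : Fin n} (hf : IsPF Finset.univ r f) :
    (pfGraph f).IsTree :=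
  ⟨pfGraph_connected hf, pfGraph_acyclic hf⟩

lemma pfGraph_eq_of_le {f : Fin n → Fin n} {r : Fin n} {T : SimpleGraph (Fin n)}
    (hf : IsPF Finset.univ r f) (hT : T.IsTree) (hle : pfGraph f ≤ T) (hn : 1 ≤ n) :
    pfGraph f = T := by
  classical
  have h1 : (pfGraph f).edgeSet.ncard = n - 1 := pfGraph_edge_ncard hf
  have h2 : T.edgeSet.ncard + 1 = n := by
    have hc := hT.card_edgeFinset
    rw [Fintype.card_fin] at hc
    rwa [Set.ncard_eq_toFinset_card' T.edgeSet]
  have hsub : (pfGraph f).edgeSet ⊆ T.edgeSet := edgeSet_subset_edgeSet.mpr hle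
  have heq : (pfGraph f).edgeSet = T.edgeSet :=
    Set.eq_of_subset_of_ncard_le hsub (by omega) (Set.toFinite _)
  exact edgeSet_inj.mp heq

/-- canonical parent function of a tree. -/
noncomputable def treeParent (T : SimpleGraph (Fin n)) (hT : T.IsTree) (r v : Fin n) : Fin n :=
  if _h : v = r then r else ((hT.existsUnique_path v r).exists.choose).getVert 1

lemma treeParent_self {T : SimpleGraph (Fin n)} (hT : T.IsTree) (r : Fin n) :
    treeParent T hT r r = r := dif_pos rfl

lemma treeParent_adj {T : SimpleGraph (Fin n)} (hT : T.IsTree) {r v : Fin n} (hvr : v ≠ r) :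
    T.Adj v (treeParent T hT r v) := by
  rw [treeParent, dif_neg hvr]
  exact Walk.adj_snd (Walk.not_nil_of_ne hvr)

lemma treeParent_len_lt {T : SimpleGraph (Fin n)} (hT : T.IsTree) {r v : Fin n} (hvr : v ≠ r) :
    ((hT.existsUnique_path (treeParent T hT r v) r).exists.choose).length <
      ((hT.existsUnique_path v r).exists.choose).length := by
  set p := (hT.existsUnique_path v r).exists.choose with hpdef
  have hp : p.IsPath := (hT.existsUnique_path v r).exists.choose_spec
  have hnil : ¬ p.Nil := Walk.not_nil_of_ne hvr
  have htp : treeParent T hT r v = p.getVert 1 := dif_neg hvr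
  have hq : p.tail.IsPath := hp.tail
  have huniq := (hT.existsUnique_path (p.getVert 1) r).unique
    ((hT.existsUnique_path (p.getVert 1) r).exists.choose_spec) hq
  rw [htp, huniq]
  have := Walk.length_tail_add_one hnil
  omega

lemma treeParent_reach {T : SimpleGraph (Fin n)} (hT : T.IsTree) (r : Fin n) :
    ∀ v, ∃ k, (treeParent T hT r)^[k] v = r := by
  have main : ∀ N : ℕ, ∀ v, ((hT.existsUnique_path v r).exists.choose).length ≤ N →
      ∃ k, (treeParent T hT r)^[k] v = r := by
    intro N
    induction N with
    | zero =>
      intro v hv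
      have : v = r := Walk.eq_of_length_eq_zero (Nat.le_zero.mp hv)
      exact ⟨0, this⟩
    | succ N ih =>
      intro v hv
      rcases eq_or_ne v r with rfl | hvr
      · exact ⟨0, rfl⟩
      · have hlt := treeParent_len_lt hT hvr
        obtain ⟨k, hk⟩ := ih (treeParent T hT r v) (by omega)
        exact ⟨k + 1, by rw [Function.iterate_succ_apply]; exact hk⟩
  intro v
  exact main _ v le_rfl

lemma treeParent_isPF {T : SimpleGraph (Fin n)} (hT : T.IsTree) (r : Fin n) :
    IsPF Finset.univ r (treeParent T hT r) :=
  ⟨fun v hv => absurd (Finset.mem_univ v) hv, fun v _ => Finset.mem_univ _,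
    treeParent_self hT r, fun v _ => treeParent_reach hT r v⟩

lemma pfGraph_treeParent_le {T : SimpleGraph (Fin n)} (hT : T.IsTree) (r : Fin n) :
    pfGraph (treeParent T hT r) ≤ T := by
  intro u v hadj
  rcases hadj.2 with h | h
  · have hur : u ≠ r := by
      intro hur
      rw [hur, treeParent_self hT r] at h
      exact hadj.1 (hur.trans h)
    have := treeParent_adj hT hur
    rwa [h] at this
  · have hvr : v ≠ r := by
      intro hvr
      rw [hvr, treeParent_self hT r] at h
      exact hadj.1 (h.symm.trans hvr.symm)
    have := treeParent_adj hT hvr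
    rw [h] at this
    exact this.symm


lemma isTree_map {α β : Type*} {G1 : SimpleGraph α} {G2 : SimpleGraph β}
    (e : G1 ≃g G2) (h : G1.IsTree) : G2.IsTree := by
  constructor
  · rw [connected_iff]
    refine ⟨(Iso.preconnected_iff e).mp h.isConnected.preconnected, ?_⟩
    exact Nonempty.map e h.isConnected.nonempty
  · intro v c hc
    exact h.IsAcyclic (c.map e.symm.toHom) (hc.map e.symm.toEquiv.injective)

/-- counting labelled trees on `Fin n`. -/
lemma card_trees (hn : 1 ≤ n) :
    Nat.card {T : SimpleGraph (Fin n) // T.IsTree} = n ^ (n - 2) := by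
  have r : Fin n := ⟨0, hn⟩
  have hbij : Function.Bijective
      (fun (f : {f : Fin n → Fin n // IsPF Finset.univ r f}) =>
        (⟨pfGraph f.1, pfGraph_isTree f.2⟩ : {T : SimpleGraph (Fin n) // T.IsTree})) := by
    constructor
    · rintro ⟨f, hf⟩ ⟨g, hg⟩ heq
      exact Subtype.ext (pfGraph_injective hf hg (congrArg Subtype.val heq))
    · rintro ⟨T, hT⟩
      refine ⟨⟨treeParent T hT r, treeParent_isPF hT r⟩, Subtype.ext ?_⟩
      exact pfGraph_eq_of_le (treeParent_isPF hT r) hT (pfGraph_treeParent_le hT r) hn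
  rw [← Nat.card_eq_of_bijective _ hbij, pf_card (Finset.mem_univ r), Finset.card_univ,
    Fintype.card_fin]

lemma le_complete (T : SimpleGraph (Fin n)) : T ≤ completeGraph (Fin n) :=
  fun {_ _} h => h.ne

def subgraph_equiv :
    {H : (completeGraph (Fin n)).Subgraph // H.IsSpanning ∧ H.coe.IsTree} ≃
      {T : SimpleGraph (Fin n) // T.IsTree} where
  toFun H := ⟨H.1.spanningCoe,
    isTree_map (H.1.spanningCoeEquivCoeOfSpanning H.2.1).symm H.2.2⟩
  invFun T := ⟨SimpleGraph.toSubgraph T.1 (le_complete T.1),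
    SimpleGraph.toSubgraph.isSpanning _ _, by
      have hsp := SimpleGraph.toSubgraph.isSpanning T.1 (le_complete T.1)
      have e := Subgraph.spanningCoeEquivCoeOfSpanning (SimpleGraph.toSubgraph T.1 (le_complete T.1)) hsp
      have hsc : (SimpleGraph.toSubgraph T.1 (le_complete T.1)).spanningCoe = T.1 := rfl
      exact isTree_map (hsc ▸ e) T.2⟩
  left_inv H := by
    apply Subtype.ext
    apply Subgraph.ext
    · exact H.2.1.verts_eq_univ.symm
    · rfl
  right_inv T := Subtype.ext rfl

end CayleyAux

open CayleyAux in
theorem cayley_formula (n : ℕ) (hn : 1 ≤ n) :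
    treeCount (completeGraph (Fin n)) = n ^ (n - 2) := by
  rw [treeCount, ← Nat.card_coe_set_eq]
  have e : ↥{H : (completeGraph (Fin n)).Subgraph | H.IsSpanning ∧ H.coe.IsTree} ≃
      {T : SimpleGraph (Fin n) // T.IsTree} :=
    (Equiv.subtypeEquivRight (fun H => Iff.rfl)).trans subgraph_equiv
  rw [Nat.card_congr e, card_trees hn]
end

section
/- A finite group G has a complete power graph if and only if G is a cyclic group of prime power order. -/
open SimpleGraph

open Finset in
lemma mem_zpowers_of_orderOf_dvd' {G : Type*} [Group G] [Finite G] [IsCyclic G]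
    {x y : G} (h : orderOf x ∣ orderOf y) : x ∈ Subgroup.zpowers y := by
  classical
  have : Fintype G := Fintype.ofFinite G
  set d := orderOf y with hd
  have hd0 : 0 < d := orderOf_pos y
  have hcard : #({a : G | a ^ d = 1} : Finset G) ≤ d := IsCyclic.card_pow_eq_one_le hd0
  have hsub : ((Subgroup.zpowers y : Set G).toFinset) ⊆ ({a : G | a ^ d = 1} : Finset G) := by
    intro a ha
    simp only [Set.mem_toFinset, SetLike.mem_coe] at ha
    simp only [Finset.mem_filter, Finset.mem_univ, true_and, Set.mem_setOf_eq]
    exact orderOf_dvd_iff_pow_eq_one.mp (orderOf_dvd_of_mem_zpowers ha)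
  have hzp : ((Subgroup.zpowers y : Set G).toFinset).card = d := by
    simp [Set.toFinset_card, Fintype.card_zpowers]
    exact hd.symm
  have heq : ((Subgroup.zpowers y : Set G).toFinset) = ({a : G | a ^ d = 1} : Finset G) :=
    Finset.eq_of_subset_of_card_le hsub (by omega)
  have hx : x ∈ ({a : G | a ^ d = 1} : Finset G) := by
    simp only [Finset.mem_filter, Finset.mem_univ, true_and, Set.mem_setOf_eq]
    exact orderOf_dvd_iff_pow_eq_one.mp h
  rw [← heq] at hx
  simpa using hx

/-- A finite group has a complete power graph iff it is cyclic of prime power order. -/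
theorem powerGraph_complete_iff (G : Type*) [Group G] [Finite G] :
    powerGraph G = ⊤ ↔ (IsCyclic G ∧ ∃ p k : ℕ, p.Prime ∧ Nat.card G = p ^ k) := by
  classical
  have : Fintype G := Fintype.ofFinite G
  constructor
  · intro h
    have adj : ∀ x y : G, x ≠ y → (x ∈ Subgroup.zpowers y ∨ y ∈ Subgroup.zpowers x) := by
      intro x y hxy
      have : (powerGraph G).Adj x y := by rw [h]; exact hxy
      exact this.2
    -- cyclic
    obtain ⟨g, hg⟩ := Finite.exists_max (orderOf : G → ℕ)
    have hcyc : IsCyclic G := by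
      refine ⟨⟨g, fun x => ?_⟩⟩
      by_cases hxg : x = g
      · subst hxg; exact Subgroup.mem_zpowers x
      rcases adj x g hxg with h1 | h1
      · exact h1
      · -- g ∈ zpowers x, so zpowers g ≤ zpowers x, equal cards, equal
        have hle : Subgroup.zpowers g ≤ Subgroup.zpowers x := Subgroup.zpowers_le.mpr h1
        have hdvd : orderOf g ∣ orderOf x := orderOf_dvd_of_mem_zpowers h1
        have heq : orderOf g = orderOf x :=
          le_antisymm (Nat.le_of_dvd (orderOf_pos x) hdvd) (hg x)
        have hcards : Nat.card (Subgroup.zpowers x) ≤ Nat.card (Subgroup.zpowers g) := by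
          rw [Nat.card_zpowers, Nat.card_zpowers, heq]
        have := Subgroup.eq_of_le_of_card_ge hle hcards
        show x ∈ Subgroup.zpowers g
        rw [this]
        exact Subgroup.mem_zpowers x
    refine ⟨hcyc, ?_⟩
    -- prime power
    by_cases h1 : Nat.card G = 1
    · exact ⟨2, 0, Nat.prime_two, by rw [h1, pow_zero]⟩
    have hpos : Nat.card G ≠ 0 := Nat.card_pos.ne'
    set n := Nat.card G with hn
    have hp : (n.minFac).Prime := Nat.minFac_prime h1
    refine ⟨n.minFac, n.primeFactorsList.length, hp, ?_⟩
    refine Nat.eq_prime_pow_of_unique_prime_dvd hpos ?_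
    intro q hq hqn
    by_contra hne
    have : Fact q.Prime := ⟨hq⟩
    have : Fact (n.minFac).Prime := ⟨hp⟩
    have hqn' : q ∣ Fintype.card G := by rwa [← Nat.card_eq_fintype_card]
    have hpn' : n.minFac ∣ Fintype.card G := by
      rw [← Nat.card_eq_fintype_card]; exact Nat.minFac_dvd n
    obtain ⟨x, hx⟩ := exists_prime_orderOf_dvd_card q hqn'
    obtain ⟨y, hy⟩ := exists_prime_orderOf_dvd_card n.minFac hpn'
    have hxy : x ≠ y := fun e => hne (by rw [← hx, ← hy, e])
    rcases adj x y hxy with h2 | h2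
    · have := orderOf_dvd_of_mem_zpowers h2
      rw [hx, hy] at this
      exact hne ((Nat.prime_dvd_prime_iff_eq hq hp).mp this)
    · have := orderOf_dvd_of_mem_zpowers h2
      rw [hx, hy] at this
      exact hne ((Nat.prime_dvd_prime_iff_eq hp hq).mp this).symm
  · rintro ⟨hc, p, k, hp, hcard⟩
    ext x y
    simp only [top_adj]
    constructor
    · exact fun h => h.1
    · intro hxy
      refine ⟨hxy, ?_⟩
      have hx : orderOf x ∣ p ^ k := hcard ▸ orderOf_dvd_natCard x
      have hy : orderOf y ∣ p ^ k := hcard ▸ orderOf_dvd_natCard y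
      obtain ⟨a, _, ha⟩ := (Nat.dvd_prime_pow hp).mp hx
      obtain ⟨b, _, hb⟩ := (Nat.dvd_prime_pow hp).mp hy
      rcases le_total a b with hab | hab
      · exact Or.inl (mem_zpowers_of_orderOf_dvd' (by rw [ha, hb]; exact pow_dvd_pow p hab))
      · exact Or.inr (mem_zpowers_of_orderOf_dvd' (by rw [ha, hb]; exact pow_dvd_pow p hab))
end

section
/- The power graph of the generalized quaternion group Q_{2^n} (n ≥ 3) is isomorphic to the join K₂ ∨ (K_{2^{n-1}-2} ⊕ 2^{n-2}·K₂), that is, a complete graph on 2 vertices joined to the disjoint union of one complete graph on 2^{n-1}-2 vertices and 2^{n-2} copies of K₂. -/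
open SimpleGraph

namespace PGQAux

open QuaternionGroup Subgroup

lemma mem_mul_of_gcd_dvd {N : ℕ} [NeZero N] {i j : ZMod N}
    (h : Nat.gcd j.val N ∣ i.val) : ∃ c : ℤ, (c : ZMod N) * j = i := by
  obtain ⟨t, ht⟩ := h
  refine ⟨Nat.gcdA j.val N * (t : ℤ), ?_⟩
  have hg : ((Nat.gcd j.val N : ℕ) : ZMod N) = (Nat.gcdA j.val N : ZMod N) * j := by
    have h1 := Nat.gcd_eq_gcd_ab j.val N
    have h2 : ((Nat.gcd j.val N : ℤ) : ZMod N) =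
        (((j.val : ℤ) * Nat.gcdA j.val N + (N : ℤ) * Nat.gcdB j.val N : ℤ) : ZMod N) := by
      rw [← h1]
    push_cast at h2 ⊢
    rw [h2, ZMod.natCast_self, ZMod.natCast_zmod_val]
    ring
  have hi : ((i.val : ℕ) : ZMod N) = i := ZMod.natCast_zmod_val i
  rw [← hi, ht]
  push_cast
  rw [hg]
  ring

lemma zmod_comparable {N : ℕ} (hN : ∃ e, N = 2 ^ e) (i j : ZMod N) :
    (∃ c : ℤ, (c : ZMod N) * j = i) ∨ (∃ c : ℤ, (c : ZMod N) * i = j) := by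
  obtain ⟨e, rfl⟩ := hN
  haveI : NeZero (2 ^ e) := ⟨pow_ne_zero e two_ne_zero⟩
  obtain ⟨ai, hai, hi⟩ := (Nat.dvd_prime_pow Nat.prime_two).mp (Nat.gcd_dvd_right i.val (2 ^ e))
  obtain ⟨aj, haj, hj⟩ := (Nat.dvd_prime_pow Nat.prime_two).mp (Nat.gcd_dvd_right j.val (2 ^ e))
  rcases le_total ai aj with hle | hle
  · right
    exact mem_mul_of_gcd_dvd (dvd_trans (hi ▸ hj ▸ pow_dvd_pow 2 hle) (Nat.gcd_dvd_left j.val _))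
  · left
    exact mem_mul_of_gcd_dvd (dvd_trans (hj ▸ hi ▸ pow_dvd_pow 2 hle) (Nat.gcd_dvd_left i.val _))

lemma a_pow' {n : ℕ} (i : ZMod (2*n)) (k : ℕ) : (a i) ^ k = a ((k : ZMod (2*n)) * i) := by
  induction k with
  | zero => simp [one_def, -a_zero]
  | succ k ih => rw [pow_succ, ih, a_mul_a]; congr 1; push_cast; ring

lemma a_zpow {n : ℕ} (i : ZMod (2*n)) (z : ℤ) : (a i) ^ z = a ((z : ZMod (2*n)) * i) := by
  cases z with
  | ofNat k => rw [Int.ofNat_eq_coe, zpow_natCast, a_pow']; norm_cast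
  | negSucc k =>
      rw [zpow_negSucc, a_pow']
      show (a _)⁻¹ = _
      rw [show (a ((((k:ℕ)+1:ℕ):ZMod (2*n)) * i))⁻¹ = a (-((((k:ℕ)+1:ℕ):ZMod (2*n)) * i)) from rfl]
      congr 1
      push_cast
      ring

lemma xa_not_mem_zpowers_a {n : ℕ} (i j : ZMod (2*n)) : xa j ∉ zpowers (a i) := by
  rintro ⟨z, hz⟩
  simp only [a_zpow] at hz
  exact absurd hz (by simp)

lemma mem_zpowers_a_iff {n : ℕ} (i : ZMod (2*n)) (g : QuaternionGroup n) :
    g ∈ zpowers (a i) ↔ ∃ c : ℤ, a ((c : ZMod (2*n)) * i) = g := by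
  constructor
  · rintro ⟨z, hz⟩; exact ⟨z, (a_zpow i z).symm.trans hz⟩
  · rintro ⟨c, hc⟩; exact ⟨c, (a_zpow i c).trans hc⟩

lemma xa_pow_three {n : ℕ} (i : ZMod (2*n)) : xa i ^ 3 = xa (i - (n:ZMod (2*n))) := by
  rw [pow_succ, xa_sq, a_mul_xa]

lemma mem_zpowers_xa_iff {n : ℕ} [NeZero n] (j : ZMod (2*n)) (g : QuaternionGroup n) :
    g ∈ zpowers (xa j) ↔
      g = 1 ∨ g = xa j ∨ g = a (n:ZMod (2*n)) ∨ g = xa (j - (n:ZMod (2*n))) := by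
  constructor
  · intro h
    obtain ⟨k, hk⟩ := (Submonoid.mem_powers_iff g (xa j)).mp (mem_powers_iff_mem_zpowers.mpr h)
    rw [← pow_mod_orderOf] at hk
    rw [orderOf_xa] at hk
    have hlt : k % 4 < 4 := Nat.mod_lt _ (by norm_num)
    interval_cases h : (k % 4) <;> simp only [pow_zero, pow_one, xa_sq, xa_pow_three] at hk
    · exact Or.inl hk.symm
    · exact Or.inr (Or.inl hk.symm)
    · exact Or.inr (Or.inr (Or.inl hk.symm))
    · exact Or.inr (Or.inr (Or.inr hk.symm))
  · rintro (rfl|rfl|rfl|rfl)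
    · exact one_mem _
    · exact mem_zpowers _
    · exact mem_powers_iff_mem_zpowers.mp ⟨2, xa_sq j⟩
    · exact mem_powers_iff_mem_zpowers.mp ⟨3, xa_pow_three j⟩

variable {m : ℕ}

lemma n_cast_ne_zero (hm : 1 ≤ m) : ((m : ZMod (2*m))) ≠ 0 := by
  haveI : NeZero (2*m) := ⟨by omega⟩
  intro h
  rw [ZMod.natCast_eq_zero_iff] at h
  exact absurd (Nat.le_of_dvd (by omega) h) (by omega)

lemma neg_n_cast : -((m : ZMod (2*m))) = (m : ZMod (2*m)) := by
  have : ((m : ZMod (2*m))) + ((m : ZMod (2*m))) = 0 := by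
    rw [← Nat.cast_add, ← two_mul, ZMod.natCast_self]
  linear_combination -this

lemma sub_n_cast (j : ZMod (2*m)) : j - (m : ZMod (2*m)) = j + (m : ZMod (2*m)) := by
  rw [sub_eq_add_neg, neg_n_cast]

lemma adj_aa (hpow : ∃ e, 2*m = 2^e) (i j : ZMod (2*m)) :
    (powerGraph (QuaternionGroup m)).Adj (a i) (a j) ↔ i ≠ j := by
  constructor
  · intro h
    intro hij
    exact h.1 (by rw [hij])
  · intro hij
    refine ⟨by simpa using hij, ?_⟩
    rcases zmod_comparable hpow i j with ⟨c, hc⟩ | ⟨c, hc⟩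
    · exact Or.inl ((mem_zpowers_a_iff j (a i)).mpr ⟨c, by rw [hc]⟩)
    · exact Or.inr ((mem_zpowers_a_iff i (a j)).mpr ⟨c, by rw [hc]⟩)

lemma adj_ax [NeZero m] (i j : ZMod (2*m)) :
    (powerGraph (QuaternionGroup m)).Adj (a i) (xa j) ↔ i = 0 ∨ i = (m : ZMod (2*m)) := by
  constructor
  · rintro ⟨-, h | h⟩
    · rw [mem_zpowers_xa_iff] at h
      rcases h with h | h | h | h
      · rw [one_def] at h; exact Or.inl (by injection h)
      · exact absurd h (by simp)
      · exact Or.inr (by injection h)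
      · exact absurd h (by simp)
    · exact absurd h (xa_not_mem_zpowers_a i j)
  · rintro (rfl | rfl)
    · exact ⟨by simp [-a_zero], Or.inl (by rw [← one_def]; exact one_mem _)⟩
    · exact ⟨by simp, Or.inl (mem_powers_iff_mem_zpowers.mp ⟨2, xa_sq j⟩)⟩

lemma adj_xx [NeZero m] (hm : 1 ≤ m) (i j : ZMod (2*m)) :
    (powerGraph (QuaternionGroup m)).Adj (xa i) (xa j) ↔ j = i + (m : ZMod (2*m)) := by
  constructor
  · rintro ⟨hne, h | h⟩
    · rw [mem_zpowers_xa_iff] at h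
      rcases h with h | h | h | h
      · exact absurd h (by simp [one_def, -a_zero])
      · exact absurd (by injection h with h'; rw [h']) hne
      · exact absurd h (by simp)
      · rw [sub_n_cast] at h
        injection h with h'
        have h2 : ((m : ZMod (2*m))) + ((m : ZMod (2*m))) = 0 := by
          rw [← Nat.cast_add, ← two_mul, ZMod.natCast_self]
        rw [h']
        linear_combination -h2
    · rw [mem_zpowers_xa_iff] at h -- second
      rcases h with h | h | h | h
      · exact absurd h (by simp [one_def, -a_zero])
      · exact absurd (by injection h with h'; rw [h']) (Ne.symm hne)
      · exact absurd h (by simp)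
      · rw [sub_n_cast] at h
        exact xa.inj h
  · rintro rfl
    refine ⟨?_, Or.inl ?_⟩
    · simp only [ne_eq, xa.injEq]
      intro h
      exact n_cast_ne_zero hm (by linear_combination -h)
    · rw [mem_zpowers_xa_iff]
      refine Or.inr (Or.inr (Or.inr ?_))
      congr 1
      rw [add_sub_cancel_right]


def dec (m k : ℕ) : ℕ := if k < m - 1 then k + 1 else k + 2

lemma dec_lt {m k : ℕ} (hm : 2 ≤ m) (hk : k < 2*m - 2) : dec m k < 2*m := by
  unfold dec; split <;> omega

lemma dec_ne_zero {m k : ℕ} : dec m k ≠ 0 := by unfold dec; split <;> omega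

lemma dec_ne_m {m k : ℕ} (hk : k < 2*m - 2) : dec m k ≠ m := by
  unfold dec; split <;> omega

def gmap (m : ℕ) : (Fin 2 ⊕ (Fin (2*m-2) ⊕ Fin m × Fin 2)) → QuaternionGroup m
  | .inl p => a ((p.val * m : ℕ) : ZMod (2*m))
  | .inr (.inl k) => a ((dec m k.val : ℕ) : ZMod (2*m))
  | .inr (.inr jb) => xa ((jb.1.val + jb.2.val * m : ℕ) : ZMod (2*m))

lemma fin2_cases (p : Fin 2) : p.val = 0 ∨ p.val = 1 := by omega

lemma cast_inj {m s t : ℕ} (hs : s < 2*m) (ht : t < 2*m) :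
    ((s : ZMod (2*m)) = (t : ZMod (2*m))) ↔ s = t := by
  constructor
  · intro h
    have h2 := congrArg ZMod.val h
    rwa [ZMod.val_cast_of_lt hs, ZMod.val_cast_of_lt ht] at h2
  · rintro rfl; rfl

lemma gmap_injective (m : ℕ) (hm : 2 ≤ m) : Function.Injective (gmap m) := by
  rintro (p | k | ⟨j, b⟩) (q | l | ⟨j', b'⟩) h <;>
    simp only [gmap, a.injEq, xa.injEq, reduceCtorEq] at h
  · rcases fin2_cases p with hp | hp <;> rcases fin2_cases q with hq | hq <;>
      rw [hp, hq] at h <;> rw [cast_inj (by omega) (by omega)] at h <;>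
      simp only [Sum.inl.injEq] <;> exact Fin.ext (by omega)
  · exfalso
    have hl := l.isLt
    rcases fin2_cases p with hp | hp <;> rw [hp] at h <;>
      rw [cast_inj (by omega) (dec_lt hm (by omega))] at h <;>
      unfold dec at h <;> split_ifs at h <;> omega
  · exfalso
    have hk := k.isLt
    rcases fin2_cases q with hq | hq <;> rw [hq] at h <;>
      rw [cast_inj (dec_lt hm (by omega)) (by omega)] at h <;>
      unfold dec at h <;> split_ifs at h <;> omega
  · have hk := k.isLt
    have hl := l.isLt
    rw [cast_inj (dec_lt hm (by omega)) (dec_lt hm (by omega))] at h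
    simp only [Sum.inr.injEq, Sum.inl.injEq]
    refine Fin.ext ?_
    unfold dec at h; split_ifs at h <;> omega
  · have hj := j.isLt
    have hj' := j'.isLt
    rcases fin2_cases b with hb | hb <;> rcases fin2_cases b' with hb' | hb' <;>
      rw [hb, hb'] at h <;> rw [cast_inj (by omega) (by omega)] at h <;>
      simp only [Sum.inr.injEq, Prod.mk.injEq] <;>
      exact ⟨Fin.ext (by omega), Fin.ext (by omega)⟩
lemma gmap_bijective (m : ℕ) (hm : 2 ≤ m) : Function.Bijective (gmap m) := by
  haveI : NeZero m := ⟨by omega⟩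
  rw [Fintype.bijective_iff_injective_and_card]
  refine ⟨gmap_injective m hm, ?_⟩
  simp only [Fintype.card_sum, Fintype.card_prod, Fintype.card_fin, QuaternionGroup.card]
  omega

lemma gmap_adj (m : ℕ) (hm : 2 ≤ m) (hpow : ∃ e, 2*m = 2^e) :
    ∀ u v, (powerGraph (QuaternionGroup m)).Adj (gmap m u) (gmap m v) ↔
      (joinGraph (completeGraph (Fin 2))
        (disjUnionGraph (completeGraph (Fin (2*m - 2))) (copiesK m 2))).Adj u v := by
  haveI : NeZero m := ⟨by omega⟩
  rintro (p | k | ⟨j, b⟩) (q | l | ⟨j', b'⟩)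
  · -- inl inl
    simp only [gmap]
    rw [adj_aa hpow]
    have hiff : (((p.val * m : ℕ) : ZMod (2*m)) = ((q.val * m : ℕ) : ZMod (2*m))) ↔ p = q := by
      constructor
      · intro h
        rcases fin2_cases p with hp | hp <;> rcases fin2_cases q with hq | hq <;>
          rw [hp, hq] at h <;> rw [cast_inj (by omega) (by omega)] at h <;>
          exact Fin.ext (by omega)
      · rintro rfl; rfl
    rw [ne_eq, hiff]
    exact Iff.rfl
  · -- inl, inr inl : True
    simp only [gmap]
    rw [adj_aa hpow]
    have hl := l.isLt
    refine iff_of_true ?_ trivial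
    rcases fin2_cases p with hp | hp <;> rw [hp] <;>
      rw [ne_eq, cast_inj (by omega) (dec_lt hm (by omega))] <;>
      unfold dec <;> split_ifs <;> omega
  · -- inl, inr inr : True
    simp only [gmap]
    rw [adj_ax]
    refine iff_of_true ?_ trivial
    rcases fin2_cases p with hp | hp <;> rw [hp]
    · left; norm_num
    · right; norm_num
  · -- inr inl, inl : True
    simp only [gmap]
    rw [adj_aa hpow]
    have hk := k.isLt
    refine iff_of_true ?_ trivial
    rcases fin2_cases q with hq | hq <;> rw [hq] <;>
      rw [ne_eq, cast_inj (dec_lt hm (by omega)) (by omega)] <;>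
      unfold dec <;> split_ifs <;> omega
  · -- inr inl, inr inl
    simp only [gmap]
    rw [adj_aa hpow]
    have hk := k.isLt
    have hl := l.isLt
    have hiff : (((dec m k.val : ℕ) : ZMod (2*m)) = ((dec m l.val : ℕ) : ZMod (2*m))) ↔ k = l := by
      rw [cast_inj (dec_lt hm (by omega)) (dec_lt hm (by omega))]
      constructor
      · intro h
        refine Fin.ext ?_
        unfold dec at h; split_ifs at h <;> omega
      · rintro rfl; rfl
    rw [ne_eq, hiff]
    exact Iff.rfl
  · -- inr inl, inr inr : False
    simp only [gmap]
    rw [adj_ax]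
    have hk := k.isLt
    refine iff_of_false ?_ not_false
    rintro (h | h)
    · rw [show (0 : ZMod (2*m)) = ((0 : ℕ) : ZMod (2*m)) by norm_num,
        cast_inj (dec_lt hm (by omega)) (by omega)] at h
      exact dec_ne_zero h
    · rw [cast_inj (dec_lt hm (by omega)) (by omega)] at h
      exact dec_ne_m (by omega) h
  · -- inr inr, inl : True
    rw [SimpleGraph.adj_comm]
    simp only [gmap]
    rw [adj_ax]
    refine iff_of_true ?_ trivial
    rcases fin2_cases q with hq | hq <;> rw [hq]
    · left; norm_num
    · right; norm_num
  · -- inr inr, inr inl : False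
    rw [SimpleGraph.adj_comm]
    simp only [gmap]
    rw [adj_ax]
    have hl := l.isLt
    refine iff_of_false ?_ not_false
    rintro (h | h)
    · rw [show (0 : ZMod (2*m)) = ((0 : ℕ) : ZMod (2*m)) by norm_num,
        cast_inj (dec_lt hm (by omega)) (by omega)] at h
      exact dec_ne_zero h
    · rw [cast_inj (dec_lt hm (by omega)) (by omega)] at h
      exact dec_ne_m (by omega) h
  · -- inr inr, inr inr
    simp only [gmap]
    rw [adj_xx (by omega : 1 ≤ m), ← Nat.cast_add]
    have hj := j.isLt
    have hj' := j'.isLt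
    have hc : ∀ s : ℕ, ((s + 2*m : ℕ) : ZMod (2*m)) = ((s : ℕ) : ZMod (2*m)) := by
      intro s
      rw [Nat.cast_add, ZMod.natCast_self, add_zero]
    have hnat : (((j'.val + b'.val * m : ℕ) : ZMod (2*m)) =
        ((j.val + b.val * m + m : ℕ) : ZMod (2*m))) ↔ (j = j' ∧ b ≠ b') := by
      rcases fin2_cases b with hb | hb <;> rcases fin2_cases b' with hb' | hb' <;>
        rw [hb, hb']
      · refine iff_of_false ?_ ?_
        · rw [cast_inj (by omega) (by omega)]; omega
        · rintro ⟨-, hbb⟩; exact hbb (Fin.ext (by omega))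
      · rw [cast_inj (by omega) (by omega)]
        constructor
        · intro h
          exact ⟨Fin.ext (by omega), fun e => by rw [Fin.ext_iff, hb, hb'] at e; omega⟩
        · rintro ⟨rfl, -⟩; omega
      · rw [show j.val + 1 * m + m = j.val + 2*m by ring, hc,
          cast_inj (by omega) (by omega)]
        constructor
        · intro h
          exact ⟨Fin.ext (by omega), fun e => by rw [Fin.ext_iff, hb, hb'] at e; omega⟩
        · rintro ⟨rfl, -⟩; omega
      · refine iff_of_false ?_ ?_
        · rw [show j.val + 1 * m + m = j.val + 2*m by ring, hc,
            cast_inj (by omega) (by omega)]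
          omega
        · rintro ⟨-, hbb⟩; exact hbb (Fin.ext (by omega))
    rw [hnat]
    constructor
    · rintro ⟨rfl, hbb⟩
      exact ⟨rfl, fun hcc => hbb (congrArg Prod.snd hcc)⟩
    · rintro ⟨h1, h2⟩
      exact ⟨h1, fun hbb => h2 (Prod.ext h1 hbb)⟩

lemma main (m : ℕ) (hm : 2 ≤ m) (hpow : ∃ e, 2*m = 2^e) :
    Nonempty ((powerGraph (QuaternionGroup m)) ≃g
      joinGraph (completeGraph (Fin 2))
        (disjUnionGraph (completeGraph (Fin (2*m - 2))) (copiesK m 2))) := by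
  haveI : NeZero m := ⟨by omega⟩
  exact ⟨SimpleGraph.Iso.symm
    ⟨Equiv.ofBijective (gmap m) (gmap_bijective m hm),
      fun {u v} => gmap_adj m hm hpow u v⟩⟩
end PGQAux

/-- The power graph of the generalized quaternion group Q_{2^n} (n ≥ 3) is
K₂ ∨ (K_{2^{n-1}-2} ⊕ 2^{n-2}·K₂). -/
theorem powerGraph_quaternion_iso (n : ℕ) (hn : 3 ≤ n) :
    Nonempty ((powerGraph (QuaternionGroup (2 ^ (n - 2)))) ≃g
      joinGraph (completeGraph (Fin 2))
        (disjUnionGraph (completeGraph (Fin (2 ^ (n - 1) - 2)))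
          (copiesK (2 ^ (n - 2)) 2))) := by
  have h2m : 2 * 2 ^ (n - 2) = 2 ^ (n - 1) := by
    rw [← pow_succ']
    congr 1
    omega
  have hmain := PGQAux.main (2 ^ (n - 2))
    (by
      have h1 : 2 ^ 1 ≤ 2 ^ (n - 2) := Nat.pow_le_pow_right (by norm_num) (by omega)
      simpa using h1)
    ⟨n - 1, h2m⟩
  rw [h2m] at hmain
  exact hmain
end
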